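/- For every prime p and every positive integer k, there exists a collection of p^k matrices B_1, B_2, ..., B_{p^k}, each a k×(k+1) matrix over the finite field F_p, such that: (1) for every 1 ≤ i ≤ p^k, the sum of the k+1 columns of B_i is the zero vector; and (2) for every pair of distinct indices 1 ≤ i ≠ j ≤ p^k and every nonempty proper subset I ⊊ [k+1], the sum Σ_{ℓ∈I} B_i^{(ℓ)} + Σ_{ℓ∈[k+1]∖I} B_j^{(ℓ)} is nonzero. -/

import Mathlib

/-- For every prime `p` and positive integer `k`, there exist `p^k`
matrices `B_1, ..., B_{p^k}` in `F_p^{k×(k+1)}` such that (1) each matrix has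
columns summing to zero, and (2) for all `i ≠ j` and every nonempty proper
`I ⊊ [k+1]`, `∑_{ℓ∈I} B_i^{(ℓ)} + ∑_{ℓ∉I} B_j^{(ℓ)} ≠ 0`. -/
theorem stmt_1 (p k : ℕ) (hp : p.Prime) (hk : 1 ≤ k) :
    ∃ B : Fin (p ^ k) → Matrix (Fin k) (Fin (k + 1)) (ZMod p),
      (∀ i, (∑ ℓ : Fin (k + 1), fun r => B i r ℓ) = 0) ∧
      (∀ i j : Fin (p ^ k), i ≠ j →
        ∀ I : Finset (Fin (k + 1)), I.Nonempty → I ≠ Finset.univ →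
          (∑ ℓ ∈ I, fun r => B i r ℓ) + (∑ ℓ ∈ Iᶜ, fun r => B j r ℓ) ≠ 0) := by
  haveI : Fact p.Prime := ⟨hp⟩
  have hk0 : k ≠ 0 := by omega
  haveI : Fintype (GaloisField p k) := Fintype.ofFinite _
  set K := GaloisField p k with hK
  have hcard : Fintype.card K = p ^ k := by
    rw [← Nat.card_eq_fintype_card]; exact GaloisField.card p k hk0
  let e : Fin (p ^ k) ≃ K := (Fintype.equivFinOfCardEq hcard).symm
  have hfr : Module.finrank (ZMod p) K = k := GaloisField.finrank p hk0
  let b : Module.Basis (Fin k) (ZMod p) K := Module.finBasisOfFinrankEq (ZMod p) K hfr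
  let a : Fin (k + 1) → K := Fin.snoc (fun j => b j) (-∑ j, b j)
  have ha_cast : ∀ j : Fin k, a j.castSucc = b j := fun j => Fin.snoc_castSucc _ _ j
  have ha_last : a (Fin.last k) = -∑ j, b j := Fin.snoc_last _ _
  have hsum_a : ∑ ℓ, a ℓ = 0 := by
    rw [Fin.sum_univ_castSucc, ha_last]
    simp [ha_cast]
  have hrepr : ∀ (ℓ : Fin (k + 1)) (j0 : Fin k),
      b.repr (a ℓ) j0 =
        if h : ℓ = Fin.last k then -1 else (if ℓ.castPred h = j0 then 1 else 0) := by
    intro ℓ j0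
    induction ℓ using Fin.lastCases with
    | last =>
      rw [ha_last, dif_pos rfl]
      simp [Finsupp.single_apply, Finset.sum_ite_eq]
    | cast i =>
      rw [ha_cast, dif_neg (Fin.castSucc_lt_last i).ne]
      simp [Module.Basis.repr_self, Finsupp.single_apply]
      congr
  have hcoef : ∀ (I : Finset (Fin (k + 1))) (j0 : Fin k),
      b.repr (∑ ℓ ∈ I, a ℓ) j0 =
        (if j0.castSucc ∈ I then 1 else 0) + (if Fin.last k ∈ I then -1 else 0) := by
    intro I j0
    rw [map_sum, Finsupp.coe_finset_sum, Finset.sum_apply]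
    have : ∀ ℓ : Fin (k + 1), (if ℓ ∈ I then b.repr (a ℓ) j0 else 0) =
        (if ℓ ∈ I then (if h : ℓ = Fin.last k then -1
          else (if ℓ.castPred h = j0 then 1 else 0)) else 0) := by
      intro ℓ; split <;> simp [hrepr]
    rw [show (∑ ℓ ∈ I, b.repr (a ℓ) j0) = ∑ ℓ : Fin (k + 1),
        (if ℓ ∈ I then b.repr (a ℓ) j0 else 0) by
      rw [Finset.sum_ite_mem, Finset.univ_inter]]
    simp_rw [this]
    rw [Fin.sum_univ_castSucc]
    congr 1
    · have : ∀ i : Fin k, (if i.castSucc ∈ I then (if h : i.castSucc = Fin.last k then (-1 : ZMod p)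
          else (if i.castSucc.castPred h = j0 then 1 else 0)) else 0) =
          (if i = j0 then (if i.castSucc ∈ I then 1 else 0) else 0) := by
        intro i
        rw [dif_neg (Fin.castSucc_lt_last i).ne]
        simp only [Fin.castPred_castSucc]
        split <;> split <;> simp_all
      simp_rw [this]
      rw [Finset.sum_ite_eq' Finset.univ j0]
      simp
    · simp
  have ha : ∀ I : Finset (Fin (k + 1)), I.Nonempty → I ≠ Finset.univ →
      (∑ ℓ ∈ I, a ℓ) ≠ 0 := by
    intro I hne hneq h0
    by_cases hl : Fin.last k ∈ I
    · obtain ⟨ℓ0, hℓ0⟩ : ∃ ℓ0, ℓ0 ∉ I := by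
        by_contra h
        push_neg at h
        exact hneq (Finset.eq_univ_of_forall h)
      have hℓ0l : ℓ0 ≠ Fin.last k := fun h => hℓ0 (h ▸ hl)
      have := hcoef I (ℓ0.castPred hℓ0l)
      rw [h0, Fin.castSucc_castPred, if_neg hℓ0, if_pos hl] at this
      simp only [map_zero, Finsupp.coe_zero, Pi.zero_apply, zero_add] at this
      exact (neg_ne_zero.mpr (one_ne_zero)) this.symm
    · obtain ⟨ℓ0, hℓ0⟩ := hne
      have hℓ0l : ℓ0 ≠ Fin.last k := fun h => hl (h ▸ hℓ0)
      have := hcoef I (ℓ0.castPred hℓ0l)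
      rw [h0, Fin.castSucc_castPred, if_pos hℓ0, if_neg hl] at this
      simp only [map_zero, Finsupp.coe_zero, Pi.zero_apply, add_zero] at this
      exact one_ne_zero this.symm
  refine ⟨fun i r ℓ => b.repr (a ℓ * e i) r, ?_, ?_⟩
  · intro i
    funext r
    rw [Finset.sum_apply]
    simp only
    rw [show (∑ ℓ : Fin (k + 1), b.repr (a ℓ * e i) r)
        = b.repr ((∑ ℓ, a ℓ) * e i) r by
      rw [Finset.sum_mul, map_sum, Finsupp.coe_finset_sum, Finset.sum_apply]]
    rw [hsum_a]
    simp
  · intro i j hij I hne hneq h0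
    have hsum : ∑ ℓ ∈ Iᶜ, a ℓ = -∑ ℓ ∈ I, a ℓ := by
      have := Finset.sum_add_sum_compl I a
      rw [hsum_a] at this
      linear_combination this
    have hx : (∑ ℓ ∈ I, a ℓ) * (e i - e j) = 0 := by
      apply b.repr.injective
      ext r
      have := congrFun h0 r
      rw [Pi.add_apply, Finset.sum_apply, Finset.sum_apply] at this
      simp only at this
      rw [show (∑ ℓ ∈ I, b.repr (a ℓ * e i) r) = b.repr ((∑ ℓ ∈ I, a ℓ) * e i) r by
          rw [Finset.sum_mul, map_sum, Finsupp.coe_finset_sum, Finset.sum_apply],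
        show (∑ ℓ ∈ Iᶜ, b.repr (a ℓ * e j) r) = b.repr ((∑ ℓ ∈ Iᶜ, a ℓ) * e j) r by
          rw [Finset.sum_mul, map_sum, Finsupp.coe_finset_sum, Finset.sum_apply]] at this
      rw [hsum] at this
      rw [neg_mul, map_neg, Finsupp.coe_neg, Pi.neg_apply] at this
      simp only [mul_sub, map_sub, Finsupp.coe_sub, Pi.sub_apply, map_zero,
        Finsupp.coe_zero, Pi.zero_apply]
      simp only [Pi.zero_apply] at this ⊢
      linear_combination this
    rcases mul_eq_zero.mp hx with hs | hd
    · exact ha I hne hneq hs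
    · exact hij (e.injective (sub_eq_zero.mp hd))
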